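/- Let G be a complete r-partite graph with parts V₁,…,V_r, together with extra edges forming a graph Hᵢ inside each part Vᵢ (with at most k−1 extra edges total). Let ρ be the spectral radius and x the Perron vector of G. Then for each i, the total eigenvector weight outside Vᵢ satisfies ρ·x_V / (ρ + |Vᵢ| + 2e(Hᵢ)/(ρ−k+1)) ≤ x_{\bar Vᵢ} ≤ ρ·x_V / (ρ + |Vᵢ| + 2e(Hᵢ)/ρ), where x_V = Σ_{v} x_v and x_{\bar Vᵢ} = Σ_{v ∉ Vᵢ} x_v. -/

import Mathlib

open SimpleGraph Finset Matrix

private def restrictPart {n r : ℕ} (H : SimpleGraph (Fin n)) (p : Fin n → Fin r)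
    (hHin : ∀ u v : Fin n, H.Adj u v → p u = p v) (i : Fin r) : SimpleGraph (Fin n) where
  Adj u v := H.Adj u v ∧ p u = i
  symm := by
    constructor
    intro u v h
    exact ⟨h.1.symm, (hHin u v h.1) ▸ h.2⟩
  loopless := by
    constructor
    intro v h
    exact H.loopless.irrefl v h.1

theorem perron_weight_outside_part (n r k : ℕ) (hr : 2 ≤ r) (hk : 1 ≤ k)
    (p : Fin n → Fin r) (H : SimpleGraph (Fin n))
    (hHin : ∀ u v : Fin n, H.Adj u v → p u = p v)
    (hHcard : H.edgeSet.ncard ≤ k - 1)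
    (G : SimpleGraph (Fin n))
    (hG : G = (⊤ : SimpleGraph (Fin r)).comap p ⊔ H)
    [DecidableRel G.Adj]
    (ρ : ℝ) (hρ : (k : ℝ) - 1 < ρ)
    (x : Fin n → ℝ) (hx : ∀ v, 0 < x v)
    (heig : (G.adjMatrix ℝ).mulVec x = ρ • x) :
    ∀ i : Fin r,
      ρ * (∑ v : Fin n, x v) /
          (ρ + ((univ.filter (fun v : Fin n => p v = i)).card : ℝ) +
            2 * (({e ∈ H.edgeSet | ∀ v ∈ e, p v = i} : Set (Sym2 (Fin n))).ncard : ℝ) /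
              (ρ - (k : ℝ) + 1))
        ≤ ∑ v ∈ univ.filter (fun v : Fin n => p v ≠ i), x v ∧
      ∑ v ∈ univ.filter (fun v : Fin n => p v ≠ i), x v
        ≤ ρ * (∑ v : Fin n, x v) /
            (ρ + ((univ.filter (fun v : Fin n => p v = i)).card : ℝ) +
              2 * (({e ∈ H.edgeSet | ∀ v ∈ e, p v = i} : Set (Sym2 (Fin n))).ncard : ℝ) / ρ) := by
  classical
  subst hG
  intro i
  set S : Finset (Fin n) := univ.filter (fun v => p v = i) with hSdef
  set Sc : Finset (Fin n) := univ.filter (fun v => p v ≠ i) with hScdef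
  set xb : ℝ := ∑ v ∈ Sc, x v with hxbdef
  have hk1 : (0:ℝ) ≤ (k:ℝ) - 1 := by
    have : (1:ℝ) ≤ k := by exact_mod_cast hk
    linarith
  have hρ0 : 0 < ρ := lt_of_le_of_lt hk1 hρ
  have hρk : 0 < ρ - k + 1 := by linarith
  have hxb0 : 0 ≤ xb := Finset.sum_nonneg fun v _ => (hx v).le
  -- per-vertex eigen equation
  have hvec : ∀ v, ∑ u ∈ ((⊤ : SimpleGraph (Fin r)).comap p ⊔ H).neighborFinset v, x u = ρ * x v := by
    intro v
    have h := congrFun heig v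
    rw [SimpleGraph.adjMatrix_mulVec_apply] at h
    simpa using h
  -- step 1
  have hstep1 : ∀ v, p v = i → ρ * x v = xb + ∑ u ∈ H.neighborFinset v, x u := by
    intro v hv
    have hsplit : ((⊤ : SimpleGraph (Fin r)).comap p ⊔ H).neighborFinset v
        = Sc ∪ H.neighborFinset v := by
      ext u
      simp only [SimpleGraph.mem_neighborFinset, SimpleGraph.sup_adj, SimpleGraph.comap_adj,
        SimpleGraph.top_adj, Finset.mem_union, hScdef, Finset.mem_filter, Finset.mem_univ,
        true_and, hv]
      constructor
      · rintro (h | h)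
        · exact Or.inl (fun hc => h (hc ▸ rfl))
        · exact Or.inr h
      · rintro (h | h)
        · exact Or.inl (fun hc => h hc.symm)
        · exact Or.inr h
    have hdisj : Disjoint Sc (H.neighborFinset v) := by
      rw [Finset.disjoint_left]
      intro u hu hu2
      rw [SimpleGraph.mem_neighborFinset] at hu2
      have := hHin v u hu2
      simp only [hScdef, Finset.mem_filter] at hu
      exact hu.2 (this ▸ hv)
    rw [← hvec v, hsplit, Finset.sum_union hdisj]
  -- degree bound
  have hHcard' : (H.edgeFinset.card : ℝ) ≤ (k : ℝ) - 1 := by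
    have h1 : H.edgeFinset.card ≤ k - 1 := by
      rwa [← SimpleGraph.coe_edgeFinset, Set.ncard_coe_finset] at hHcard
    have h2 : ((k - 1 : ℕ) : ℝ) = (k : ℝ) - 1 := by
      push_cast [hk]; ring
    calc (H.edgeFinset.card : ℝ) ≤ ((k - 1 : ℕ) : ℝ) := by exact_mod_cast h1
      _ = (k : ℝ) - 1 := h2
  have hdegH : ∀ v : Fin n, ((H.neighborFinset v).card : ℝ) ≤ (k : ℝ) - 1 := by
    intro v
    refine le_trans ?_ hHcard'
    have : (H.neighborFinset v).card ≤ H.edgeFinset.card := by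
      apply Finset.card_le_card_of_injOn (fun u => s(v, u))
      · intro u hu
        simp only [Finset.mem_coe, SimpleGraph.mem_edgeFinset, SimpleGraph.mem_edgeSet]
        exact (SimpleGraph.mem_neighborFinset H v u).1 hu
      · intro a _ b _ hab
        exact Sym2.congr_right.1 hab
    exact_mod_cast this
  -- upper per-vertex bound
  have hM : ∀ u, p u = i → (ρ - k + 1) * x u ≤ xb := by
    intro u hu
    obtain ⟨v0, hv0, hmax⟩ := Finset.exists_max_image S x ⟨u, by simp [hSdef, hu]⟩
    have hv0i : p v0 = i := by simpa [hSdef] using hv0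
    have h1 := hstep1 v0 hv0i
    have h2 : ∑ w ∈ H.neighborFinset v0, x w ≤ ((k:ℝ) - 1) * x v0 := by
      calc ∑ w ∈ H.neighborFinset v0, x w ≤ ∑ _w ∈ H.neighborFinset v0, x v0 := by
            apply Finset.sum_le_sum
            intro w hw
            apply hmax
            rw [SimpleGraph.mem_neighborFinset] at hw
            simp [hSdef, (hHin v0 w hw) ▸ hv0i]
        _ = ((H.neighborFinset v0).card : ℝ) * x v0 := by
            rw [Finset.sum_const, nsmul_eq_mul]
        _ ≤ ((k:ℝ) - 1) * x v0 := by
            exact mul_le_mul_of_nonneg_right (hdegH v0) (hx v0).le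
    have h3 : (ρ - k + 1) * x v0 ≤ xb := by nlinarith
    have h4 : x u ≤ x v0 := hmax u (by simp [hSdef, hu])
    calc (ρ - k + 1) * x u ≤ (ρ - k + 1) * x v0 := by
          exact mul_le_mul_of_nonneg_left h4 hρk.le
      _ ≤ xb := h3
  -- lower per-vertex bound
  have hlow : ∀ u, p u = i → xb ≤ ρ * x u := by
    intro u hu
    have h1 := hstep1 u hu
    have h2 : 0 ≤ ∑ w ∈ H.neighborFinset u, x w :=
      Finset.sum_nonneg fun w _ => (hx w).le
    linarith
  -- the restricted graph
  set H' : SimpleGraph (Fin n) := restrictPart H p hHin i with hH'def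
  have hH'adj : ∀ u v : Fin n, H'.Adj u v ↔ H.Adj u v ∧ p u = i := fun u v => Iff.rfl
  set W : ℝ := ∑ v : Fin n, ∑ u ∈ H'.neighborFinset v, x u with hWdef
  set ei : ℕ := H'.edgeFinset.card with heidef
  -- identity
  have hWS : ∑ v ∈ S, ∑ u ∈ H.neighborFinset v, x u = W := by
    have h1 : ∀ v ∈ S, ∑ u ∈ H.neighborFinset v, x u = ∑ u ∈ H'.neighborFinset v, x u := by
      intro v hv
      have hvi : p v = i := by simpa [hSdef] using hv
      apply Finset.sum_congr _ (fun _ _ => rfl)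
      ext u
      simp [SimpleGraph.mem_neighborFinset, hH'adj, hvi]
    rw [Finset.sum_congr rfl h1, hWdef]
    apply Finset.sum_subset (Finset.subset_univ S)
    intro v _ hv
    have hvi : p v ≠ i := by simpa [hSdef] using hv
    have hempty : H'.neighborFinset v = ∅ := by
      ext u
      simp only [SimpleGraph.mem_neighborFinset, hH'adj, Finset.notMem_empty, iff_false]
      rintro ⟨_, h2⟩
      exact hvi h2
    rw [hempty, Finset.sum_empty]
  have hid : ρ * (∑ v : Fin n, x v) = (ρ + (S.card : ℝ)) * xb + W := by
    have hsplit : (∑ v ∈ S, x v) + xb = ∑ v : Fin n, x v :=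
      Finset.sum_filter_add_sum_filter_not univ (fun v => p v = i) x
    have h1 : ρ * ∑ v ∈ S, x v = ∑ v ∈ S, ρ * x v := Finset.mul_sum _ _ _
    have h2 : ∑ v ∈ S, ρ * x v = (S.card : ℝ) * xb + W := by
      calc ∑ v ∈ S, ρ * x v
          = ∑ v ∈ S, (xb + ∑ u ∈ H.neighborFinset v, x u) :=
            Finset.sum_congr rfl (fun v hv => hstep1 v (by simpa [hSdef] using hv))
        _ = (S.card : ℝ) * xb + ∑ v ∈ S, ∑ u ∈ H.neighborFinset v, x u := by
            rw [Finset.sum_add_distrib, Finset.sum_const, nsmul_eq_mul]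
        _ = (S.card : ℝ) * xb + W := by rw [hWS]
    calc ρ * (∑ v : Fin n, x v) = ρ * (∑ v ∈ S, x v) + ρ * xb := by rw [← hsplit]; ring
      _ = ((S.card : ℝ) * xb + W) + ρ * xb := by rw [h1, h2]
      _ = (ρ + (S.card : ℝ)) * xb + W := by ring
  -- sum of degrees
  have hdeg : ∑ v : Fin n, ((H'.degree v : ℝ)) = 2 * (ei : ℝ) := by
    have h := SimpleGraph.sum_degrees_eq_twice_card_edges H'
    rw [heidef]
    exact_mod_cast congrArg (Nat.cast : ℕ → ℝ) h
  -- upper bound for W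
  have hWhigh : W ≤ 2 * (ei : ℝ) * (xb / (ρ - k + 1)) := by
    calc W ≤ ∑ v : Fin n, ((H'.degree v : ℝ) * (xb / (ρ - k + 1))) := by
          rw [hWdef]
          apply Finset.sum_le_sum
          intro v _
          rw [← SimpleGraph.card_neighborFinset_eq_degree]
          calc ∑ u ∈ H'.neighborFinset v, x u
              ≤ ∑ _u ∈ H'.neighborFinset v, xb / (ρ - k + 1) := by
                apply Finset.sum_le_sum
                intro u hu
                rw [SimpleGraph.mem_neighborFinset, hH'adj] at hu
                have hui : p u = i := (hHin v u hu.1) ▸ hu.2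
                rw [le_div_iff₀ hρk]
                have := hM u hui
                linarith
            _ = ((H'.neighborFinset v).card : ℝ) * (xb / (ρ - k + 1)) := by
                rw [Finset.sum_const, nsmul_eq_mul]
      _ = (∑ v : Fin n, (H'.degree v : ℝ)) * (xb / (ρ - k + 1)) := by
          rw [Finset.sum_mul]
      _ = 2 * (ei : ℝ) * (xb / (ρ - k + 1)) := by rw [hdeg]
  -- lower bound for W
  have hWlow : 2 * (ei : ℝ) * (xb / ρ) ≤ W := by
    calc 2 * (ei : ℝ) * (xb / ρ) = (∑ v : Fin n, (H'.degree v : ℝ)) * (xb / ρ) := by rw [hdeg]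
      _ = ∑ v : Fin n, ((H'.degree v : ℝ) * (xb / ρ)) := by rw [Finset.sum_mul]
      _ ≤ W := by
          rw [hWdef]
          apply Finset.sum_le_sum
          intro v _
          rw [← SimpleGraph.card_neighborFinset_eq_degree]
          calc ((H'.neighborFinset v).card : ℝ) * (xb / ρ)
              = ∑ _u ∈ H'.neighborFinset v, xb / ρ := by
                rw [Finset.sum_const, nsmul_eq_mul]
            _ ≤ ∑ u ∈ H'.neighborFinset v, x u := by
                apply Finset.sum_le_sum
                intro u hu
                rw [SimpleGraph.mem_neighborFinset, hH'adj] at hu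
                have hui : p u = i := (hHin v u hu.1) ▸ hu.2
                rw [div_le_iff₀ hρ0]
                have := hlow u hui
                linarith
  -- identify the edge count
  have heiset : ({e ∈ H.edgeSet | ∀ v ∈ e, p v = i} : Set (Sym2 (Fin n))) = ↑H'.edgeFinset := by
    rw [SimpleGraph.coe_edgeFinset]
    ext e
    induction e using Sym2.ind with
    | _ a b =>
      simp only [Set.mem_setOf_eq, SimpleGraph.mem_edgeSet, Sym2.mem_iff, hH'adj]
      constructor
      · rintro ⟨h1, h2⟩
        exact ⟨h1, h2 a (Or.inl rfl)⟩
      · rintro ⟨h1, h2⟩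
        refine ⟨h1, ?_⟩
        intro v hv
        rcases hv with h | h
        · rw [h]; exact h2
        · rw [h]; exact (hHin a b h1) ▸ h2
  have hei2 : (({e ∈ H.edgeSet | ∀ v ∈ e, p v = i} : Set (Sym2 (Fin n))).ncard : ℝ) = (ei : ℝ) := by
    rw [heiset, Set.ncard_coe_finset, heidef]
  rw [hei2]
  have hcS : (0:ℝ) ≤ (S.card : ℝ) := Nat.cast_nonneg _
  have hcE : (0:ℝ) ≤ (ei : ℝ) := Nat.cast_nonneg _
  have hA : 0 < ρ + (S.card : ℝ) + 2 * (ei : ℝ) / (ρ - k + 1) := by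
    have h1 : 0 ≤ 2 * (ei : ℝ) / (ρ - k + 1) := div_nonneg (by linarith) hρk.le
    linarith
  have hB : 0 < ρ + (S.card : ℝ) + 2 * (ei : ℝ) / ρ := by
    have h1 : 0 ≤ 2 * (ei : ℝ) / ρ := div_nonneg (by linarith) hρ0.le
    linarith
  constructor
  · rw [div_le_iff₀ hA]
    have e1 : xb * (ρ + (S.card : ℝ) + 2 * (ei : ℝ) / (ρ - k + 1))
        = (ρ + (S.card : ℝ)) * xb + 2 * (ei : ℝ) * (xb / (ρ - k + 1)) := by
      ring
    linarith
  · rw [le_div_iff₀ hB]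
    have e1 : xb * (ρ + (S.card : ℝ) + 2 * (ei : ℝ) / ρ)
        = (ρ + (S.card : ℝ)) * xb + 2 * (ei : ℝ) * (xb / ρ) := by
      ring
    linarith
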